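/- For every x ∈ V and every integer n ≥ 1, the open d-ball of radius 1/n centered at x equals the class B n x, that is, {y ∈ V | d(x,y) < 1/n} = B n x; consequently the topology on V induced by the metric d equals τ. (Abstract form of Theorem 5.5, part (3), of the paper.) -/

import Mathlib

/-- `x` and `y` are related: equal, `E 0`-equivalent, or joined by an elementary move. -/
def Related {V : Type*} (E : ℕ → V → V → Prop) (A : V → V → Prop) (x y : V) : Prop :=
  x = y ∨ E 0 x y ∨ A x y

open Classical in
/-- The partial distance `d̂` (given a total value on unrelated pairs, which is
never used): `d̂(x,y) = 0` if `x = y`; if `x ≠ y` and `E 0 x y`, then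
`d̂(x,y) = 1/n` where `n` is the least (equivalently, for a separating refining
family, the unique) integer with `¬ E n x y` — so `E (n-1) x y` and `¬ E n x y`;
and `d̂(x,y) = 1` if `¬ E 0 x y`. -/
noncomputable def dhat {V : Type*} (E : ℕ → V → V → Prop) (x y : V) : ℝ :=
  if x = y then 0
  else if E 0 x y then ((sInf {n : ℕ | ¬ E n x y} : ℕ) : ℝ)⁻¹
  else 1

/-- `c` is a chain of length-parameter `ℓ` from `x` to `y`: consecutive terms are related. -/
def IsChain' {V : Type*} (E : ℕ → V → V → Prop) (A : V → V → Prop)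
    (x y : V) (ℓ : ℕ) (c : ℕ → V) : Prop :=
  c 0 = x ∧ c ℓ = y ∧ ∀ i < ℓ, Related E A (c i) (c (i + 1))

/-- The length of a chain: the sum of `d̂` over consecutive pairs. -/
noncomputable def chainLength {V : Type*} (E : ℕ → V → V → Prop)
    (ℓ : ℕ) (c : ℕ → V) : ℝ :=
  ∑ i ∈ Finset.range ℓ, dhat E (c i) (c (i + 1))

/-- The distance `d(x,y)`: the infimum of the lengths of all chains from `x` to `y`. -/
noncomputable def pdist {V : Type*} (E : ℕ → V → V → Prop) (A : V → V → Prop)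
    (x y : V) : ℝ :=
  sInf {L : ℝ | ∃ ℓ c, IsChain' E A x y ℓ c ∧ L = chainLength E ℓ c}

section Aux
variable {V : Type*} {E : ℕ → V → V → Prop} {A : V → V → Prop}

lemma myE_mono (hRefine : ∀ n x y, E (n + 1) x y → E n x y)
    {m n : ℕ} (h : m ≤ n) {x y : V} (hxy : E n x y) : E m x y := by
  induction n with
  | zero => exact Nat.le_zero.mp h ▸ hxy
  | succ k ih =>
    rcases Nat.le_succ_iff.mp h with h' | rfl
    · exact ih h' (hRefine k x y hxy)
    · exact hxy

lemma mydhat_nonneg (x y : V) : 0 ≤ dhat E x y := by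
  rw [dhat]; split_ifs
  · exact le_refl 0
  · exact inv_nonneg.mpr (Nat.cast_nonneg _)
  · exact zero_le_one

lemma mydhat_lt (hRefine : ∀ n x y, E (n + 1) x y → E n x y)
    {n : ℕ} (hn : 1 ≤ n) {x y : V} (h : E n x y) : dhat E x y < 1 / (n : ℝ) := by
  have hnpos : (0:ℝ) < n := by exact_mod_cast hn
  rw [dhat]; split_ifs with h1 h2
  · positivity
  · set S := {k : ℕ | ¬ E k x y} with hSdef
    by_cases hS : S.Nonempty
    · have hge : n + 1 ≤ sInf S := by
        by_contra hc
        push_neg at hc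
        exact (Nat.sInf_mem hS) (myE_mono hRefine (Nat.lt_succ_iff.mp hc) h)
      rw [one_div]
      exact inv_strictAnti₀ hnpos (by exact_mod_cast Nat.lt_of_succ_le hge)
    · rw [Set.not_nonempty_iff_eq_empty.mp hS, Nat.sInf_empty]
      simpa using by positivity
  · exact absurd (myE_mono hRefine (Nat.zero_le n) h) h2

lemma myE_of_dhat_lt (hEquiv : ∀ n, Equivalence (E n))
    {n : ℕ} (hn : 1 ≤ n) {x y : V} (h : dhat E x y < 1 / (n : ℝ)) : E n x y := by
  have hnpos : (0:ℝ) < n := by exact_mod_cast hn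
  rw [dhat] at h; split_ifs at h with h1 h2
  · exact h1 ▸ (hEquiv n).refl x
  · set S := {k : ℕ | ¬ E k x y} with hSdef
    by_contra hc
    have hSne : S.Nonempty := ⟨n, hc⟩
    have h0 : sInf S ≠ 0 := fun h0 => (h0 ▸ Nat.sInf_mem hSne) h2
    have hle : sInf S ≤ n := Nat.sInf_le hc
    have : (1:ℝ)/n ≤ ((sInf S : ℕ) : ℝ)⁻¹ := by
      rw [one_div]
      apply inv_anti₀
      · exact_mod_cast Nat.pos_of_ne_zero h0
      · exact_mod_cast hle
    linarith
  · have : (1:ℝ)/n ≤ 1 := by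
      rw [div_le_one hnpos]; exact_mod_cast hn
    linarith

lemma mychainLength_nonneg (ℓ : ℕ) (c : ℕ → V) : 0 ≤ chainLength E ℓ c :=
  Finset.sum_nonneg fun i _ => mydhat_nonneg _ _

lemma mychain_E (hEquiv : ∀ n, Equivalence (E n))
    {n : ℕ} (hn : 1 ≤ n) {x y : V} {ℓ : ℕ} {c : ℕ → V}
    (hc : IsChain' E A x y ℓ c) (hlen : chainLength E ℓ c < 1 / (n : ℝ)) : E n x y := by
  have hstep : ∀ i < ℓ, E n (c i) (c (i + 1)) := by
    intro i hi
    apply myE_of_dhat_lt hEquiv hn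
    calc dhat E (c i) (c (i + 1)) ≤ chainLength E ℓ c :=
          Finset.single_le_sum (f := fun j => dhat E (c j) (c (j + 1)))
            (fun j _ => mydhat_nonneg _ _) (Finset.mem_range.mpr hi)
      _ < 1 / (n : ℝ) := hlen
  have key : ∀ i ≤ ℓ, E n x (c i) := by
    intro i hi
    induction i with
    | zero => exact hc.1 ▸ (hEquiv n).refl (c 0)
    | succ k ih =>
      exact (hEquiv n).trans (ih (Nat.le_of_succ_le hi)) (hstep k hi)
  exact hc.2.1 ▸ key ℓ le_rfl

lemma mypdist_bdd (x y : V) :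
    BddBelow {L : ℝ | ∃ ℓ c, IsChain' E A x y ℓ c ∧ L = chainLength E ℓ c} :=
  ⟨0, by rintro L ⟨ℓ, c, _, rfl⟩; exact mychainLength_nonneg ℓ c⟩

lemma mypdist_nonempty
    (hChain : ∀ x y : V, ∃ z : V, E 0 x z ∧ ∃ ℓ c, IsChain' E A z y ℓ c) (x y : V) :
    {L : ℝ | ∃ ℓ c, IsChain' E A x y ℓ c ∧ L = chainLength E ℓ c}.Nonempty := by
  obtain ⟨z, hz, ℓ, c, hc0, hcl, hcs⟩ := hChain x y
  refine ⟨_, ℓ + 1, fun i => if i = 0 then x else c (i - 1), ⟨?_, ?_, ?_⟩, rfl⟩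
  · simp
  · simp [hcl]
  · intro i hi
    rcases Nat.eq_zero_or_pos i with rfl | hpos
    · have hr : Related E A x z := Or.inr (Or.inl hz)
      simpa [hc0] using hr
    · have h1 : i ≠ 0 := hpos.ne'
      have h2 : i + 1 ≠ 0 := by omega
      have h3 : i - 1 + 1 = i := by omega
      simpa [h1, h2, h3] using hcs (i - 1) (by omega)

lemma mypdist_le_add {x z : V} {ℓ : ℕ} {c : ℕ → V}
    (hc : IsChain' E A x z ℓ c) (y : V) (hrel : Related E A z y) :
    pdist E A x y ≤ chainLength E ℓ c + dhat E z y := by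
  apply csInf_le (mypdist_bdd x y)
  refine ⟨ℓ + 1, fun i => if i ≤ ℓ then c i else y, ⟨?_, ?_, ?_⟩, ?_⟩
  · simpa using hc.1
  · simp
  · intro i hi
    rcases Nat.lt_or_ge i ℓ with hlt | hge
    · have h1 : i ≤ ℓ := hlt.le
      have h2 : i + 1 ≤ ℓ := hlt
      simpa [h1, h2] using hc.2.2 i hlt
    · have : i = ℓ := by omega
      subst this
      have h2 : ¬ (i + 1 ≤ i) := by omega
      simpa [h2, hc.2.1] using hrel
  · symm
    rw [chainLength, Finset.sum_range_succ]
    have hlast : dhat E (if ℓ ≤ ℓ then c ℓ else y) (if ℓ + 1 ≤ ℓ then c (ℓ+1) else y)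
        = dhat E z y := by
      have h2 : ¬ (ℓ + 1 ≤ ℓ) := by omega
      simp [h2, hc.2.1]
    rw [hlast, chainLength]
    congr 1
    apply Finset.sum_congr rfl
    intro i hi
    have hi' := Finset.mem_range.mp hi
    have h1 : i ≤ ℓ := hi'.le
    have h2 : i + 1 ≤ ℓ := hi'
    simp [h1, h2]

lemma mypdist_self_le (x : V) : pdist E A x x ≤ 0 := by
  apply csInf_le (mypdist_bdd x x)
  exact ⟨0, fun _ => x, ⟨rfl, rfl, by omega⟩, by simp [chainLength]⟩

lemma myball_eq (hEquiv : ∀ n, Equivalence (E n))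
    (hRefine : ∀ n x y, E (n + 1) x y → E n x y)
    (hChain : ∀ x y : V, ∃ z : V, E 0 x z ∧ ∃ ℓ c, IsChain' E A z y ℓ c)
    (x : V) {n : ℕ} (hn : 1 ≤ n) :
    {y : V | pdist E A x y < 1 / (n : ℝ)} = {y : V | E n x y} := by
  have hnpos : (0:ℝ) < n := by exact_mod_cast hn
  ext y
  simp only [Set.mem_setOf_eq]
  constructor
  · intro h
    obtain ⟨L, ⟨ℓ, c, hc, rfl⟩, hL⟩ :=
      exists_lt_of_csInf_lt (mypdist_nonempty hChain x y) h
    exact mychain_E hEquiv hn hc hL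
  · intro h
    have htriv : IsChain' E A x x 0 (fun _ => x) := ⟨rfl, rfl, by omega⟩
    have hle := mypdist_le_add htriv y (Or.inr (Or.inl (myE_mono hRefine (Nat.zero_le n) h)))
    have hlen0 : chainLength E 0 (fun _ => x) = 0 := by simp [chainLength]
    have hdl := mydhat_lt hRefine hn h
    rw [hlen0, zero_add] at hle
    linarith
end Aux

/-- Abstract form of Theorem 5.5, part (3): for every `x ∈ V` and every integer
`n ≥ 1`, the open `d`-ball of radius `1/n` about `x` equals the class `B n x`;
consequently the topology induced by the metric `d` (generated by its open
balls) equals the topology `τ` generated by the classes. -/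
theorem pdist_ball_eq_class_and_topology (V : Type*) (E : ℕ → V → V → Prop)
    (A : V → V → Prop)
    (hEquiv : ∀ n, Equivalence (E n))
    (hRefine : ∀ n x y, E (n + 1) x y → E n x y)
    (hSep : ∀ x y : V, x ≠ y → ∃ n : ℕ, ¬ E n x y)
    (hAsymm : ∀ x y : V, A x y → A y x)
    (hAirrefl : ∀ x : V, ¬ A x x)
    (hChain : ∀ x y : V, ∃ z : V, E 0 x z ∧ ∃ ℓ c, IsChain' E A z y ℓ c) :
    (∀ (x : V) (n : ℕ), 1 ≤ n →
      {y : V | pdist E A x y < 1 / (n : ℝ)} = {y : V | E n x y}) ∧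
    TopologicalSpace.generateFrom
        {s : Set V | ∃ (x : V) (ε : ℝ), 0 < ε ∧ s = {y : V | pdist E A x y < ε}} =
      TopologicalSpace.generateFrom {s : Set V | ∃ n x, s = {y | E n x y}} := by
  have hball : ∀ (x : V) (n : ℕ), 1 ≤ n →
      {y : V | pdist E A x y < 1 / (n : ℝ)} = {y : V | E n x y} :=
    fun x n hn => myball_eq hEquiv hRefine hChain x hn
  refine ⟨hball, ?_⟩
  apply le_antisymm
  · -- balls topology ≤ classes topology : classes are open in balls topology
    rw [TopologicalSpace.le_generateFrom_iff_subset_isOpen]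
    rintro s ⟨n, x, rfl⟩
    letI : TopologicalSpace V := TopologicalSpace.generateFrom
      {s : Set V | ∃ (x : V) (ε : ℝ), 0 < ε ∧ s = {y : V | pdist E A x y < ε}}
    show IsOpen {y | E n x y}
    have hcover : {y | E n x y} =
        ⋃ x' ∈ {x' : V | E n x x'}, {y : V | pdist E A x' y < 1 / ((n+1 : ℕ) : ℝ)} := by
      have hrw : ∀ x' : V, {y : V | pdist E A x' y < 1 / ((n+1 : ℕ) : ℝ)}
          = {y : V | E (n+1) x' y} := fun x' => hball x' (n+1) (by omega)
      ext y
      simp only [Set.mem_setOf_eq, Set.mem_iUnion, hrw]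
      constructor
      · intro h
        exact ⟨y, h, (hEquiv (n+1)).refl y⟩
      · rintro ⟨x', hx', hy⟩
        exact (hEquiv n).trans hx' (hRefine n x' y hy)
    rw [hcover]
    apply isOpen_biUnion
    intro x' _
    exact TopologicalSpace.isOpen_generateFrom_of_mem
      ⟨x', 1 / ((n+1 : ℕ) : ℝ), by positivity, rfl⟩
  · -- classes topology ≤ balls topology : balls are open in classes topology
    rw [TopologicalSpace.le_generateFrom_iff_subset_isOpen]
    rintro s ⟨x, ε, hε, rfl⟩
    letI : TopologicalSpace V := TopologicalSpace.generateFrom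
      {s : Set V | ∃ n x, s = {y | E n x y}}
    show IsOpen {y | pdist E A x y < ε}
    have key : ∀ z, pdist E A x z < ε →
        ∃ n : ℕ, 1 ≤ n ∧ {y : V | E n z y} ⊆ {y | pdist E A x y < ε} := by
      intro z hz
      obtain ⟨L, ⟨ℓ, c, hc, rfl⟩, hL⟩ :=
        exists_lt_of_csInf_lt (mypdist_nonempty hChain x z) hz
      obtain ⟨n, hn⟩ := exists_nat_one_div_lt (show (0:ℝ) < ε - chainLength E ℓ c by linarith)
      refine ⟨n + 1, by omega, ?_⟩
      intro y hy
      simp only [Set.mem_setOf_eq] at hy ⊢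
      have hrel : Related E A z y :=
        Or.inr (Or.inl (myE_mono hRefine (Nat.zero_le (n+1)) hy))
      have h1 := mypdist_le_add hc y hrel
      have h2 : dhat E z y < 1 / ((n+1 : ℕ) : ℝ) := mydhat_lt hRefine (by omega) hy
      have h3 : (1 : ℝ) / ((n+1 : ℕ) : ℝ) = 1 / ((n : ℝ) + 1) := by push_cast; ring
      rw [h3] at h2
      linarith
    choose! f hf1 hf2 using key
    have hcover : {y | pdist E A x y < ε} =
        ⋃ z ∈ {y | pdist E A x y < ε}, {y : V | E (f z) z y} := by
      ext y
      simp only [Set.mem_setOf_eq, Set.mem_iUnion]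
      constructor
      · intro h
        exact ⟨y, h, (hEquiv (f y)).refl y⟩
      · rintro ⟨z, hz, hy⟩
        exact hf2 z hz hy
    rw [hcover]
    apply isOpen_biUnion
    intro z _
    exact TopologicalSpace.isOpen_generateFrom_of_mem ⟨f z, z, rfl⟩
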